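/- Let d, T be positive integers, λ > 0, and x_1, …, x_T ∈ ℝ^d with ‖x_t‖_2 ≤ 1 for every t. With V_T = λ I_d + ∑_{t=1}^T x_t x_tᵀ, one has det(V_T) ≤ ((dλ + T)/d)^d, and consequently log( det(V_T) / det(λ I_d) ) ≤ d · log(1 + T/(λ d)). -/

import Mathlib

open Matrix Finset

lemma my_psd_vecMulVec {d : ℕ} (v : Fin d → ℝ) : (vecMulVec v v).PosSemidef := by
  have h : vecMulVec v v = (Matrix.replicateRow Unit v)ᴴ * Matrix.replicateRow Unit v := by
    ext i j
    simp [vecMulVec_apply, Matrix.mul_apply, Matrix.conjTranspose_apply, Matrix.replicateRow, Matrix.replicateCol]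
  rw [h]
  exact Matrix.posSemidef_conjTranspose_mul_self _

lemma my_trace_eq_sum_eigenvalues {d : ℕ} {A : Matrix (Fin d) (Fin d) ℝ}
    (hA : A.IsHermitian) : A.trace = ∑ i, hA.eigenvalues i := by
  nth_rewrite 1 [hA.spectral_theorem]
  rw [Unitary.conjStarAlgAut_apply, Matrix.trace_mul_cycle, Unitary.coe_star_mul_self, one_mul, Matrix.trace_diagonal]
  simp

lemma my_amgm {d : ℕ} (hd : 0 < d) (z : Fin d → ℝ) (hz : ∀ i, 0 ≤ z i) :
    ∏ i, z i ≤ ((∑ i, z i) / d) ^ d := by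
  have hd' : (0:ℝ) < d := by exact_mod_cast hd
  have h := Real.geom_mean_le_arith_mean_weighted Finset.univ (fun _ => (d:ℝ)⁻¹) z
    (fun _ _ => by positivity) (by simp [Finset.card_univ]; field_simp) (fun i _ => hz i)
  have hL : (∏ i, z i ^ ((d:ℝ)⁻¹)) ^ d = ∏ i, z i := by
    rw [← Finset.prod_pow]
    refine Finset.prod_congr rfl fun i _ => ?_
    rw [← Real.rpow_natCast (z i ^ ((d:ℝ)⁻¹)) d, ← Real.rpow_mul (hz i),
      inv_mul_cancel₀ hd'.ne', Real.rpow_one]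
  have hR : ∑ i, (d:ℝ)⁻¹ * z i = (∑ i, z i) / d := by
    rw [← Finset.mul_sum]; ring
  calc ∏ i, z i = (∏ i, z i ^ ((d:ℝ)⁻¹)) ^ d := hL.symm
    _ ≤ ((∑ i, z i) / d) ^ d := by
        apply pow_le_pow_left₀ (Finset.prod_nonneg fun i _ => Real.rpow_nonneg (hz i) _)
        rw [← hR]; exact h

/-- if `‖x_t‖₂ ≤ 1` for all `t`, then
`det(V_T) ≤ ((dλ + T)/d)^d` and `log(det(V_T)/det(λ I)) ≤ d log(1 + T/(λ d))`. -/
theorem det_upper_bound (d T : ℕ) (hd : 0 < d) (hT : 0 < T)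
    (lam : ℝ) (hlam : 0 < lam) (x : ℕ → Fin d → ℝ)
    (hx : ∀ t ∈ Finset.Icc 1 T, Real.sqrt (∑ i, (x t i) ^ 2) ≤ 1)
    (V : ℕ → Matrix (Fin d) (Fin d) ℝ)
    (hV : ∀ t, V t = lam • (1 : Matrix (Fin d) (Fin d) ℝ) +
      ∑ s ∈ Finset.Icc 1 t, vecMulVec (x s) (x s)) :
    (V T).det ≤ (((d : ℝ) * lam + T) / d) ^ d ∧
      Real.log ((V T).det / (lam • (1 : Matrix (Fin d) (Fin d) ℝ)).det) ≤
        d * Real.log (1 + T / (lam * d)) := by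
  have hd' : (0:ℝ) < d := by exact_mod_cast hd
  -- positive definiteness
  have hsmul : (lam • (1 : Matrix (Fin d) (Fin d) ℝ)) = Matrix.diagonal (fun _ => lam) :=
    Matrix.smul_one_eq_diagonal lam
  have hpsum : (∑ s ∈ Finset.Icc 1 T, vecMulVec (x s) (x s)).PosSemidef := by
    refine Finset.sum_induction _ _ (fun a b ha hb => ha.add hb) Matrix.PosSemidef.zero ?_
    exact fun s _ => my_psd_vecMulVec (x s)
  have hpd : (V T).PosDef := by
    rw [hV, hsmul]
    exact (Matrix.PosDef.diagonal fun _ => hlam).add_posSemidef hpsum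
  have hherm : (V T).IsHermitian := hpd.isHermitian
  -- trace bound
  have htr : (V T).trace ≤ (d : ℝ) * lam + T := by
    rw [hV, Matrix.trace_add, Matrix.trace_smul, Matrix.trace_one, Matrix.trace_sum]
    have h1 : ∀ s ∈ Finset.Icc 1 T, (vecMulVec (x s) (x s)).trace ≤ 1 := by
      intro s hs
      have h2 : (vecMulVec (x s) (x s)).trace = ∑ i, (x s i) ^ 2 := by
        simp [Matrix.trace, Matrix.diag, vecMulVec_apply, sq]
      rw [h2]
      have h3 := hx s hs
      have h4 : (0:ℝ) ≤ ∑ i, (x s i) ^ 2 := Finset.sum_nonneg fun i _ => sq_nonneg _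
      nlinarith [Real.sq_sqrt h4, Real.sqrt_nonneg (∑ i, (x s i) ^ 2)]
    calc lam • (Fintype.card (Fin d) : ℝ) + ∑ s ∈ Finset.Icc 1 T, (vecMulVec (x s) (x s)).trace
        ≤ lam • (Fintype.card (Fin d) : ℝ) + ∑ s ∈ Finset.Icc 1 T, (1:ℝ) := by
          gcongr with s hs; exact h1 s hs
      _ = (d : ℝ) * lam + T := by
          simp [Fintype.card_fin, Nat.card_Icc, smul_eq_mul, mul_comm]
  -- eigenvalue facts
  have hdet : (V T).det = ∏ i, hherm.eigenvalues i := by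
    have := hherm.det_eq_prod_eigenvalues
    simpa using this
  have hev : ∀ i, 0 ≤ hherm.eigenvalues i := hpd.posSemidef.eigenvalues_nonneg
  have htr2 : (V T).trace = ∑ i, hherm.eigenvalues i := my_trace_eq_sum_eigenvalues hherm
  have hmain : (V T).det ≤ (((d : ℝ) * lam + T) / d) ^ d := by
    rw [hdet]
    calc ∏ i, hherm.eigenvalues i ≤ ((∑ i, hherm.eigenvalues i) / d) ^ d :=
          my_amgm hd _ hev
      _ ≤ (((d : ℝ) * lam + T) / d) ^ d := by
          gcongr
          · exact div_nonneg (Finset.sum_nonneg fun i _ => hev i) hd'.le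
          · rw [← htr2]; exact htr
  constructor
  · exact hmain
  · have hdetpos : 0 < (V T).det := hpd.det_pos
    have hdetsmul : (lam • (1 : Matrix (Fin d) (Fin d) ℝ)).det = lam ^ d := by
      rw [Matrix.det_smul, Matrix.det_one, Fintype.card_fin, mul_one]
    rw [hdetsmul]
    have hlampow : (0:ℝ) < lam ^ d := pow_pos hlam d
    have hkey : (((d : ℝ) * lam + T) / d) ^ d / lam ^ d = (1 + T / (lam * d)) ^ d := by
      rw [← div_pow]
      congr 1
      field_simp
    calc Real.log ((V T).det / lam ^ d)
        ≤ Real.log ((((d : ℝ) * lam + T) / d) ^ d / lam ^ d) := by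
          apply Real.log_le_log (by positivity)
          gcongr
      _ = d * Real.log (1 + T / (lam * d)) := by
          rw [hkey, Real.log_pow]
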